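/- For μ ≥ 1 and real a ≥ b ≥ 0, (a+b)^μ ≥ a^μ + (μ²/(μ+1))·a^{μ−1}·b + (2^μ − μ²/(μ+1) − 1)·b^μ. -/

import Mathlib

open Real

lemma star_aux {μ x : ℝ} (hμ : 1 ≤ μ) (hx : 0 ≤ x) (hx1 : x ≤ 1) :
    (μ + 1) + μ * (μ - 1) * x ≤ (μ + 1) * (1 + x) ^ (μ - 1) := by
  have hμ0 : (0:ℝ) < μ + 1 := by linarith
  rcases le_or_gt 2 μ with h2 | h2
  · have hb := one_add_mul_self_le_rpow_one_add (by linarith : (-1:ℝ) ≤ x)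
      (by linarith : 1 ≤ μ - 1)
    nlinarith [mul_le_mul_of_nonneg_left hb hμ0.le,
      mul_nonneg hx (show (0:ℝ) ≤ μ - 1 by linarith)]
  · have hb := rpow_one_add_le_one_add_mul_self (by linarith : (-1:ℝ) ≤ x)
      (by linarith : (0:ℝ) ≤ 2 - μ) (by linarith : 2 - μ ≤ 1)
    -- (1+x)^(2-μ) ≤ 1 + (2-μ)*x
    have h1x : (0:ℝ) < 1 + x := by linarith
    have hD : (0:ℝ) < (1 + x) ^ (2 - μ) := rpow_pos_of_pos h1x _
    have hsplit : (1 + x) ^ (μ - 1) * (1 + x) ^ (2 - μ) = 1 + x := by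
      rw [← rpow_add h1x]
      norm_num
    have hDen : (0:ℝ) < 1 + (2 - μ) * x := by nlinarith
    -- want: ((μ+1) + μ(μ-1)x) * (1+(2-μ)x) ≤ (μ+1)(1+x)
    have hkey : ((μ + 1) + μ * (μ - 1) * x) * (1 + (2 - μ) * x) ≤ (μ + 1) * (1 + x) := by
      have hq1 : (0:ℝ) ≤ (μ - 1) * x * (1 - x) :=
        mul_nonneg (mul_nonneg (by linarith) hx) (by linarith)
      have hq2 : (0:ℝ) ≤ ((μ - 1) * (μ - 1) * (μ - 1)) * (x * x) :=
        mul_nonneg (mul_nonneg (mul_nonneg (by linarith) (by linarith)) (by linarith))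
          (mul_nonneg hx hx)
      nlinarith [hq1, hq2]
    have hlhs : (0:ℝ) ≤ (μ + 1) + μ * (μ - 1) * x := by nlinarith
    calc (μ + 1) + μ * (μ - 1) * x
        ≤ ((μ + 1) * (1 + x)) / (1 + (2 - μ) * x) := by
          rw [le_div_iff₀ hDen]; linarith [hkey]
      _ ≤ ((μ + 1) * (1 + x)) / ((1 + x) ^ (2 - μ)) := by
          apply div_le_div_of_nonneg_left _ hD hb
          positivity
      _ = (μ + 1) * (1 + x) ^ (μ - 1) := by
          rw [eq_comm, eq_div_iff hD.ne', mul_assoc, hsplit]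

lemma key_ineq {μ x : ℝ} (hμ : 1 ≤ μ) (hx : 0 < x) (hx1 : x ≤ 1) :
    1 + (μ ^ 2 / (μ + 1)) * x + (2 ^ μ - μ ^ 2 / (μ + 1) - 1) * x ^ μ ≤ (1 + x) ^ μ := by
  have hμ0 : (0:ℝ) < μ + 1 := by linarith
  set c : ℝ := μ ^ 2 / (μ + 1) with hc
  have hcmul : c * (μ + 1) = μ ^ 2 := by
    rw [hc, div_mul_cancel₀ _ hμ0.ne']
  set G : ℝ → ℝ := fun t => ((1 + t) ^ μ - 1 - c * t) * t ^ (-μ) with hG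
  have hderiv : ∀ t : ℝ, 0 < t → HasDerivAt G
      ((μ * (1 + t) ^ (μ - 1) - c) * t ^ (-μ)
        + ((1 + t) ^ μ - 1 - c * t) * (-μ * t ^ (-μ - 1))) t := by
    intro t ht
    have h1t : (0:ℝ) < 1 + t := by linarith
    have hN : HasDerivAt (fun t : ℝ => (1 + t) ^ μ - 1 - c * t)
        (μ * (1 + t) ^ (μ - 1) - c) t := by
      have h1 : HasDerivAt (fun t : ℝ => (1 + t) ^ μ) (1 * μ * (1 + t) ^ (μ - 1)) t :=
        HasDerivAt.rpow_const ((hasDerivAt_id t).const_add 1) (Or.inl h1t.ne')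
      have h2 : HasDerivAt (fun t : ℝ => (1 + t) ^ μ - 1 - c * t) (1 * μ * (1 + t) ^ (μ - 1) - c * 1) t :=
        (h1.sub_const 1).sub ((hasDerivAt_id t).const_mul c)
      convert h2 using 1
      ring
    have hM : HasDerivAt (fun t : ℝ => t ^ (-μ)) (-μ * t ^ (-μ - 1)) t :=
      hasDerivAt_rpow_const (Or.inl ht.ne')
    exact hN.mul hM
  have hanti : AntitoneOn G (Set.Icc x 1) := by
    apply antitoneOn_of_deriv_nonpos (convex_Icc x 1)
    · intro t ht
      exact ((hderiv t (lt_of_lt_of_le hx ht.1)).continuousAt).continuousWithinAt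
    · intro t ht
      rw [interior_Icc] at ht
      exact ((hderiv t (hx.trans ht.1)).differentiableAt).differentiableWithinAt
    · intro t ht
      rw [interior_Icc] at ht
      have ht0 : 0 < t := hx.trans ht.1
      have ht1 : t ≤ 1 := ht.2.le
      have h1t : (0:ℝ) < 1 + t := by linarith
      rw [(hderiv t ht0).deriv]
      have hsplit1 : t ^ (-μ) = t ^ (-μ - 1) * t := by
        rw [← rpow_add_one ht0.ne' (-μ - 1)]; ring_nf
      have hsplit2 : (1 + t) ^ μ = (1 + t) ^ (μ - 1) * (1 + t) := by
        rw [← rpow_add_one h1t.ne' (μ - 1)]; ring_nf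
      have hstar := star_aux hμ ht0.le ht1
      have hE : (μ * (1 + t) ^ (μ - 1) - c) * t - μ * ((1 + t) ^ μ - 1 - c * t)
          = -μ * (1 + t) ^ (μ - 1) + μ + c * (μ - 1) * t := by
        rw [hsplit2]; ring
      have hE2 : -μ * (1 + t) ^ (μ - 1) + μ + c * (μ - 1) * t ≤ 0 := by
        have hmul : μ * ((μ + 1) + μ * (μ - 1) * t) ≤ μ * ((μ + 1) * (1 + t) ^ (μ - 1)) :=
          mul_le_mul_of_nonneg_left hstar (by linarith)
        have hct : c * (μ - 1) * t * (μ + 1) = μ * (μ * (μ - 1) * t) := by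
          rw [show c * (μ - 1) * t * (μ + 1) = (c * (μ + 1)) * ((μ - 1) * t) by ring, hcmul]
          ring
        nlinarith [rpow_pos_of_pos h1t (μ - 1)]
      have hpos : (0:ℝ) < t ^ (-μ - 1) := rpow_pos_of_pos ht0 _
      have : (μ * (1 + t) ^ (μ - 1) - c) * t ^ (-μ)
          + ((1 + t) ^ μ - 1 - c * t) * (-μ * t ^ (-μ - 1))
          = t ^ (-μ - 1) * ((μ * (1 + t) ^ (μ - 1) - c) * t - μ * ((1 + t) ^ μ - 1 - c * t)) := by
        rw [hsplit1]; ring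
      rw [this, hE]
      exact mul_nonpos_of_nonneg_of_nonpos hpos.le hE2
  have hmem1 : (1:ℝ) ∈ Set.Icc x 1 := ⟨hx1, le_rfl⟩
  have hmemx : x ∈ Set.Icc x 1 := ⟨le_rfl, hx1⟩
  have hGx := hanti hmemx hmem1 hx1
  have hG1 : G 1 = 2 ^ μ - 1 - c := by
    show ((1 + 1 : ℝ) ^ μ - 1 - c * 1) * (1:ℝ) ^ (-μ) = 2 ^ μ - 1 - c
    rw [one_rpow]
    norm_num
  rw [hG1] at hGx
  -- G x ≥ 2^μ - 1 - c ; multiply by x^μ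
  have hxμ : (0:ℝ) < x ^ μ := rpow_pos_of_pos hx μ
  have h2 := mul_le_mul_of_nonneg_right hGx hxμ.le
  have hcancel : ((1 + x) ^ μ - 1 - c * x) * x ^ (-μ) * x ^ μ = (1 + x) ^ μ - 1 - c * x := by
    rw [mul_assoc, ← rpow_add hx]
    norm_num
  rw [hG] at h2
  rw [hcancel] at h2
  nlinarith [h2]

theorem stmt_16 (μ a b : ℝ) (hμ : 1 ≤ μ) (hb : 0 ≤ b) (hab : b ≤ a) :
    (a + b) ^ μ ≥ a ^ μ + (μ ^ 2 / (μ + 1)) * a ^ (μ - 1) * b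
      + (2 ^ μ - μ ^ 2 / (μ + 1) - 1) * b ^ μ := by
  rcases eq_or_lt_of_le hb with hb0 | hb0
  · rw [← hb0]
    rw [Real.zero_rpow (by linarith : μ ≠ 0)]
    simp
  · have ha : 0 < a := lt_of_lt_of_le hb0 hab
    set x : ℝ := b / a with hxdef
    have hx : 0 < x := div_pos hb0 ha
    have hx1 : x ≤ 1 := (div_le_one ha).mpr hab
    have hkey := key_ineq hμ hx hx1
    have haμ : (0:ℝ) < a ^ μ := rpow_pos_of_pos ha μ
    have hab1 : a + b = a * (1 + x) := by
      rw [hxdef, mul_add, mul_one, mul_comm a (b / a), div_mul_cancel₀ b ha.ne']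
    have h1 : (a + b) ^ μ = a ^ μ * (1 + x) ^ μ := by
      rw [hab1, mul_rpow ha.le (by linarith : (0:ℝ) ≤ 1 + x)]
    have h2 : a ^ (μ - 1) * b = a ^ μ * x := by
      rw [rpow_sub ha, rpow_one, hxdef, div_mul_eq_mul_div, mul_div_assoc]
    have hbax : b = a * x := by
      rw [hxdef, mul_comm]
      exact (div_mul_cancel₀ b ha.ne').symm
    have h3 : b ^ μ = a ^ μ * x ^ μ := by
      rw [show b ^ μ = (a * x) ^ μ by rw [← hbax], mul_rpow ha.le hx.le]
    rw [h1, h3, mul_assoc (μ ^ 2 / (μ + 1)), h2]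
    have hmul := mul_le_mul_of_nonneg_left hkey haμ.le
    have hexp : a ^ μ * (1 + μ ^ 2 / (μ + 1) * x + (2 ^ μ - μ ^ 2 / (μ + 1) - 1) * x ^ μ)
        = a ^ μ + μ ^ 2 / (μ + 1) * (a ^ μ * x)
          + (2 ^ μ - μ ^ 2 / (μ + 1) - 1) * (a ^ μ * x ^ μ) := by ring
    rw [hexp] at hmul
    linarith
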